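/- For any nonempty subset X of the real line ℝ, the Gromov–Hausdorff distance between X and ℝ equals the Hausdorff distance between X and ℝ: d_GH(X, ℝ) = d_H(X, ℝ). -/

import Mathlib

open ENNReal

/-- A correspondence between `X` and `Y`: a relation whose projections are surjective. -/
def IsCorrespondence {X Y : Type*} (R : Set (X × Y)) : Prop :=
  (∀ x : X, ∃ y : Y, (x, y) ∈ R) ∧ (∀ y : Y, ∃ x : X, (x, y) ∈ R)

/-- The distortion of a relation between two (pseudo)metric spaces, valued in `ℝ≥0∞`. -/
noncomputable def relDis {X Y : Type*} [PseudoMetricSpace X] [PseudoMetricSpace Y]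
    (R : Set (X × Y)) : ℝ≥0∞ :=
  ⨆ p ∈ R, ⨆ q ∈ R, ENNReal.ofReal |dist p.1 q.1 - dist p.2 q.2|

/-- The Gromov–Hausdorff distance between two (pseudo)metric spaces, defined (via the
standard characterization `2 d_GH = inf dis R`) as half the infimum of distortions of
correspondences. -/
noncomputable def ghDist (X Y : Type*) [PseudoMetricSpace X] [PseudoMetricSpace Y] : ℝ≥0∞ :=
  (⨅ R ∈ {R : Set (X × Y) | IsCorrespondence R}, relDis R) / 2

/-- A map of ℝ with distortion ≤ D has (D/2+ε)-dense image. -/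
lemma rough_dense (g : ℝ → ℝ) (D : ℝ) (hD : 0 ≤ D)
    (hg : ∀ s t : ℝ, abs (|g s - g t| - |s - t|) ≤ D) (y ε : ℝ) (hε : 0 < ε) :
    ∃ s : ℝ, |g s - y| ≤ D / 2 + ε := by
  classical
  -- Step 1: find a, b with g a ≤ y ≤ g b
  obtain ⟨a, b, hga, hgb⟩ : ∃ a b : ℝ, g a ≤ y ∧ y ≤ g b := by
    set T : ℝ := |y - g 0| + 2 * D + 1 with hT
    have hTpos : 0 < T := by positivity
    have h1 := abs_le.mp (hg T (-T))
    have h2 := abs_le.mp (hg T 0)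
    have h3 := abs_le.mp (hg (-T) 0)
    have e1 : |T - -T| = 2 * T := by rw [abs_of_pos (by linarith)]; ring
    have e2 : |T - (0:ℝ)| = T := by rw [abs_of_pos (by linarith)]; ring_nf
    have e3 : |(-T) - (0:ℝ)| = T := by rw [abs_of_neg (by linarith)]; ring_nf
    rw [e1] at h1; rw [e2] at h2; rw [e3] at h3
    have a2 := abs_le.mp (show |g T - g 0| ≤ T + D by linarith [h2.2, le_abs_self (g T - g 0)])
    have a3 := abs_le.mp (show |g (-T) - g 0| ≤ T + D by
      linarith [h3.2, le_abs_self (g (-T) - g 0)])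
    have a1 : 2 * T - D ≤ |g T - g (-T)| := by linarith [h1.1]
    have hy1 : y - g 0 ≤ |y - g 0| := le_abs_self _
    have hy2 : -|y - g 0| ≤ y - g 0 := neg_abs_le _
    rcases le_total (g T) (g (-T)) with h | h
    · refine ⟨T, -T, ?_, ?_⟩
      · have : |g T - g (-T)| = g (-T) - g T := by rw [abs_of_nonpos (by linarith)]; ring
        rw [this] at a1
        linarith [a3.2]
      · have : |g T - g (-T)| = g (-T) - g T := by rw [abs_of_nonpos (by linarith)]; ring
        rw [this] at a1
        linarith [a2.1]
    · refine ⟨-T, T, ?_, ?_⟩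
      · have : |g T - g (-T)| = g T - g (-T) := abs_of_nonneg (by linarith)
        rw [this] at a1
        linarith [a2.2]
      · have : |g T - g (-T)| = g T - g (-T) := abs_of_nonneg (by linarith)
        rw [this] at a1
        linarith [a3.1]
  -- Step 2: walk from a to b with steps of size ≤ ε
  set N : ℕ := max ⌈|b - a| / ε⌉₊ 1 with hN
  have hN1 : 1 ≤ N := le_max_right _ _
  have hNpos : (0:ℝ) < N := by exact_mod_cast Nat.lt_of_lt_of_le Nat.zero_lt_one hN1
  have hstep : |b - a| / N ≤ ε := by
    rw [div_le_iff₀ hNpos]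
    have h5 : |b - a| / ε ≤ N := le_trans (Nat.le_ceil _) (by exact_mod_cast le_max_left _ _)
    have h6 := mul_le_mul_of_nonneg_right h5 hε.le
    rw [div_mul_cancel₀ _ hε.ne'] at h6
    linarith
  set t : ℕ → ℝ := fun n => a + n * ((b - a) / N) with ht
  have ht0 : t 0 = a := by simp [ht]
  have htN : t N = b := by show a + (N:ℝ) * ((b - a) / N) = b; rw [mul_div_assoc', mul_div_cancel_left₀ _ hNpos.ne']; ring
  have hP : ∃ n, y ≤ g (t n) := ⟨N, by rw [htN]; exact hgb⟩
  set n₀ := Nat.find hP with hn₀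
  have hPn₀ : y ≤ g (t n₀) := Nat.find_spec hP
  rcases Nat.eq_zero_or_pos n₀ with h0 | hpos
  · refine ⟨a, ?_⟩
    have : g a = y := le_antisymm hga (by rw [← ht0, ← h0]; exact hPn₀)
    rw [this]
    simp
    positivity
  · obtain ⟨m, hm⟩ : ∃ m, n₀ = m + 1 := ⟨n₀ - 1, (Nat.succ_pred_eq_of_pos hpos).symm⟩
    have hPm : ¬ y ≤ g (t m) := Nat.find_min hP (by omega)
    push_neg at hPm
    have hgap : g (t n₀) - g (t m) ≤ ε + D := by
      rw [hm]
      have h4 := abs_le.mp (hg (t (m+1)) (t m))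
      have e4 : |t (m+1) - t m| = |b - a| / N := by
        have : t (m+1) - t m = (b - a) / N := by simp [ht]; ring
        rw [this, abs_div, abs_of_pos hNpos]
      rw [e4] at h4
      have := le_abs_self (g (t (m+1)) - g (t m))
      linarith [h4.2]
    rcases le_or_gt (y - g (t m)) ((D + ε)/2) with hc | hc
    · exact ⟨t m, by rw [abs_of_nonpos (by linarith)]; linarith⟩
    · exact ⟨t n₀, by rw [abs_of_nonneg (by linarith)]; linarith⟩

lemma relDis_pair_le {X Y : Type*} [PseudoMetricSpace X] [PseudoMetricSpace Y]
    {R : Set (X × Y)} {p q : X × Y} (hp : p ∈ R) (hq : q ∈ R) :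
    ENNReal.ofReal |dist p.1 q.1 - dist p.2 q.2| ≤ relDis R := by
  calc ENNReal.ofReal |dist p.1 q.1 - dist p.2 q.2|
      ≤ ⨆ q ∈ R, ENNReal.ofReal |dist p.1 q.1 - dist p.2 q.2| := le_iSup₂ (f := fun q (_ : q ∈ R) =>
        ENNReal.ofReal |dist p.1 q.1 - dist p.2 q.2|) q hq
    _ ≤ relDis R := le_iSup₂ (f := fun p (_ : p ∈ R) => ⨆ q ∈ R,
        ENNReal.ofReal |dist p.1 q.1 - dist p.2 q.2|) p hp

/-- For any nonempty subset `X` of the real line, the Gromov–Hausdorff distance between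
`X` and `ℝ` equals the Hausdorff distance between `X` and `ℝ`. -/
theorem stmt_12 (X : Set ℝ) (hX : X.Nonempty) :
    ghDist ↥X ℝ = EMetric.hausdorffEdist X (Set.univ : Set ℝ) := by
  classical
  set H := EMetric.hausdorffEdist X (Set.univ : Set ℝ) with hH
  apply le_antisymm
  · -- upper bound: ghDist ≤ H
    apply ENNReal.le_of_forall_pos_le_add
    intro ε hε hHtop
    set h : ℝ := H.toReal with hh
    set R : Set (↥X × ℝ) := {p | dist (p.1 : ℝ) p.2 ≤ h + ε} with hR
    have hcorr : IsCorrespondence R := by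
      constructor
      · intro x
        exact ⟨(x : ℝ), by simp [hR]; positivity⟩
      · intro r
        have hlt : EMetric.hausdorffEdist (Set.univ : Set ℝ) X < H + ENNReal.ofReal ε := by
          show Metric.hausdorffEDist (Set.univ : Set ℝ) X < _; rw [Metric.hausdorffEDist_comm]; show H < _
          refine ENNReal.lt_add_right hHtop.ne ?_
          simp [hε.ne']
        obtain ⟨x, hxX, hxlt⟩ := EMetric.exists_edist_lt_of_hausdorffEdist_lt
          (Set.mem_univ r) hlt
        refine ⟨⟨x, hxX⟩, ?_⟩
        simp only [hR, Set.mem_setOf_eq]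
        have hd : dist (x : ℝ) r = (edist r x).toReal := by
          rw [edist_comm, edist_dist, ENNReal.toReal_ofReal dist_nonneg]
        rw [hd]
        calc (edist r x).toReal ≤ (H + ENNReal.ofReal ε).toReal := by
              apply ENNReal.toReal_mono _ hxlt.le
              exact (ENNReal.add_ne_top.mpr ⟨hHtop.ne, ofReal_ne_top⟩)
          _ = h + ε := by rw [ENNReal.toReal_add hHtop.ne ofReal_ne_top, ENNReal.toReal_ofReal (NNReal.coe_nonneg ε)]
    have hdis : relDis R ≤ ENNReal.ofReal (2 * (h + ε)) := by
      refine iSup₂_le fun p hp => iSup₂_le fun q hq => ?_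
      apply ENNReal.ofReal_le_ofReal
      have h1 : dist (dist (p.1 : ℝ) (q.1 : ℝ)) (dist p.2 q.2) ≤
          dist (p.1 : ℝ) p.2 + dist (q.1 : ℝ) q.2 := dist_dist_dist_le _ _ _ _
      rw [Real.dist_eq] at h1
      have hp' : dist (p.1 : ℝ) p.2 ≤ h + ε := hp
      have hq' : dist (q.1 : ℝ) q.2 ≤ h + ε := hq
      rw [Subtype.dist_eq]
      linarith
    have hgh : ghDist ↥X ℝ ≤ relDis R / 2 := by
      apply ENNReal.div_le_div_right
      exact iInf₂_le R hcorr
    have hεnn : (0:ℝ) ≤ (ε:ℝ) := NNReal.coe_nonneg ε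
    have hhnn : (0:ℝ) ≤ h := ENNReal.toReal_nonneg
    calc ghDist ↥X ℝ ≤ ENNReal.ofReal (2 * (h + ε)) / 2 := le_trans hgh (ENNReal.div_le_div_right hdis 2)
      _ = ENNReal.ofReal (h + ε) := by
          rw [ENNReal.ofReal_mul (by norm_num : (0:ℝ) ≤ 2)]
          rw [ENNReal.ofReal_ofNat]
          rw [mul_div_assoc, ENNReal.mul_div_cancel' (by norm_num) (by norm_num)]
      _ = H + ↑ε := by
          rw [ENNReal.ofReal_add hhnn hεnn, ENNReal.ofReal_coe_nnreal,
            hh, ENNReal.ofReal_toReal hHtop.ne]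
  · -- lower bound: H ≤ ghDist
    rw [ghDist, ENNReal.le_div_iff_mul_le (Or.inl (by norm_num)) (Or.inl (by norm_num))]
    refine le_iInf₂ fun R hR => ?_
    rcases eq_or_ne (relDis R) ⊤ with htop | htop
    · simp [htop]
    set D : ℝ := (relDis R).toReal with hD
    have hD0 : 0 ≤ D := ENNReal.toReal_nonneg
    obtain ⟨f, hf⟩ := Classical.axiomOfChoice hR.2
    set g : ℝ → ℝ := fun s => (f s : ℝ) with hg
    have hkey : ∀ s t : ℝ, abs (|g s - g t| - |s - t|) ≤ D := by
      intro s t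
      have h1 := relDis_pair_le (hf s) (hf t)
      have h2 : relDis R = ENNReal.ofReal D := (ENNReal.ofReal_toReal htop).symm
      rw [h2] at h1
      rw [ENNReal.ofReal_le_ofReal_iff hD0] at h1
      simpa [Subtype.dist_eq, Real.dist_eq, hg] using h1
    have hdense : ∀ y : ℝ, Metric.infDist y X ≤ D / 2 := by
      intro y
      apply _root_.le_of_forall_pos_le_add
      intro ε hε
      obtain ⟨s, hs⟩ := rough_dense g D hD0 hkey y ε hε
      calc Metric.infDist y X ≤ dist y (g s) := Metric.infDist_le_dist_of_mem (f s).2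
        _ ≤ D / 2 + ε := by rw [Real.dist_eq, abs_sub_comm]; exact hs
    have hmain : H ≤ ENNReal.ofReal (D / 2) := by
      rw [hH]
      apply EMetric.hausdorffEdist_le_of_infEdist
      · intro x hx
        rw [EMetric.infEdist_zero_of_mem (Set.mem_univ x)]
        exact zero_le
      · intro y _
        have hne : EMetric.infEdist y X ≠ ⊤ := Metric.infEdist_ne_top hX
        show EMetric.infEdist y X ≤ _
        rw [ENNReal.le_ofReal_iff_toReal_le hne (by positivity)]
        exact hdense y
    calc H * 2 ≤ ENNReal.ofReal (D / 2) * 2 := mul_le_mul_left hmain 2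
      _ = ENNReal.ofReal D := by
          rw [show (2:ℝ≥0∞) = ENNReal.ofReal 2 from (ENNReal.ofReal_ofNat 2).symm,
            ← ENNReal.ofReal_mul (by positivity)]
          norm_num
      _ = relDis R := ENNReal.ofReal_toReal htop
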